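/- Let d ≥ 1, k ≥ 5, and 0 < h < λ(k). Let M ≥ 4 be an integer such that ξ − (d+1) log ξ − 1 ≥ 0 for all real ξ ≥ M, and let N ∈ ℕ satisfy p′_{N−1} h ≥ 1, q′_{N−1} ≥ M, and (d log M + 3)/p′_N < λ(k) − h. Set p_0 = p′_0 = 1, q_n = q′_n for 0 ≤ n < N, and p_{n+1} = p_n q_n throughout. Then there exists a sequence of integers (q_{N+l})_{l≥0} such that for every l ≥ 0 (with p_{N+l+1} = p_{N+l} q_{N+l}): (i) q_{N+l−1} < q_{N+l} ≤ (q_{N+l−1} − 1)!; (ii) p_{N+l}·h + 3 ≤ log q_{N+l} ≤ p_{N+l}·h + d·log(M+l) + 3; (iii) (M+l)^d divides q_{N+l}; (iv) M + l + 1 ≤ q_{N+l}. -/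

import Mathlib

namespace ToeplitzPaper

open Filter Topology


/-- The pair `(p'_n, q'_n)` of sequences: `p'_0 = 1`, `q'_0 = k`,
`p'_{n+1} = p'_n q'_n`, `q'_{n+1} = (q'_n − 1)!`. -/
def grill (k : ℕ) : ℕ → ℕ × ℕ
  | 0 => (1, k)
  | n + 1 => ((grill k n).1 * (grill k n).2, Nat.factorial ((grill k n).2 - 1))

/-- The sequence `p'_n = p'_n(k)`. -/
def pSeq' (k n : ℕ) : ℕ := (grill k n).1

/-- The sequence `q'_n = q'_n(k)`. -/
def qSeq' (k n : ℕ) : ℕ := (grill k n).2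

/-- `λ_n(k) = (1/p'_n) log q'_n` (natural logarithm). -/
noncomputable def lamSeq (k : ℕ) (n : ℕ) : ℝ := Real.log (qSeq' k n) / (pSeq' k n)

/-- Given `q_0, q_1, q_2, …`, the sequence `p` with `p_0 = 1` and
`p_{n+1} = p_n · q_n`. -/
def pFrom (q : ℕ → ℕ) : ℕ → ℕ
  | 0 => 1
  | n + 1 => pFrom q n * q n

lemma qSeq'_ge (k : ℕ) (hk : 5 ≤ k) : ∀ n, 5 ≤ qSeq' k n := by
  intro n
  induction n with
  | zero => exact hk
  | succ n ih =>
    have : qSeq' k (n+1) = Nat.factorial (qSeq' k n - 1) := rfl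
    rw [this]
    have h4 : 4 ≤ qSeq' k n - 1 := by omega
    calc 5 ≤ Nat.factorial 4 := by decide
    _ ≤ Nat.factorial (qSeq' k n - 1) := Nat.factorial_le h4

lemma pSeq'_pos (k : ℕ) (hk : 5 ≤ k) : ∀ n, 0 < pSeq' k n := by
  intro n
  induction n with
  | zero => exact Nat.one_pos
  | succ n ih =>
    have : pSeq' k (n+1) = pSeq' k n * qSeq' k n := rfl
    rw [this]
    exact Nat.mul_pos ih (by have := qSeq'_ge k hk n; omega)

lemma lamSeq_anti (k : ℕ) (hk : 5 ≤ k) : ∀ n m, n ≤ m → lamSeq k m ≤ lamSeq k n := by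
  have step : ∀ n, lamSeq k (n+1) ≤ lamSeq k n := by
    intro n
    have hq := qSeq'_ge k hk n
    have hp := pSeq'_pos k hk n
    have hqR : (5:ℝ) ≤ (qSeq' k n : ℝ) := by exact_mod_cast hq
    have hpR : (0:ℝ) < (pSeq' k n : ℝ) := by exact_mod_cast hp
    have h1 : lamSeq k (n+1) = Real.log (Nat.factorial (qSeq' k n - 1)) / ((pSeq' k n : ℝ) * (qSeq' k n : ℝ)) := by
      have e1 : qSeq' k (n+1) = Nat.factorial (qSeq' k n - 1) := rfl
      have e2 : pSeq' k (n+1) = pSeq' k n * qSeq' k n := rfl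
      rw [lamSeq, e1, e2]; push_cast; ring_nf
    rw [h1, lamSeq]
    rw [div_le_div_iff₀ (by positivity) hpR]
    have hfac : Real.log (Nat.factorial (qSeq' k n - 1)) ≤ (qSeq' k n : ℝ) * Real.log (qSeq' k n) := by
      have h2 : (Nat.factorial (qSeq' k n - 1) : ℝ) ≤ ((qSeq' k n - 1 : ℕ) : ℝ) ^ (qSeq' k n - 1 : ℕ) := by
        exact_mod_cast Nat.factorial_le_pow _
      have hpos : (0:ℝ) < (Nat.factorial (qSeq' k n - 1) : ℝ) := by
        exact_mod_cast Nat.factorial_pos _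
      calc Real.log (Nat.factorial (qSeq' k n - 1))
          ≤ Real.log (((qSeq' k n - 1 : ℕ) : ℝ) ^ (qSeq' k n - 1 : ℕ)) :=
            (Real.log_le_log_iff hpos (lt_of_lt_of_le hpos h2)).2 h2
        _ = ((qSeq' k n - 1 : ℕ) : ℝ) * Real.log ((qSeq' k n - 1 : ℕ) : ℝ) := by
            rw [Real.log_pow]
        _ ≤ (qSeq' k n : ℝ) * Real.log (qSeq' k n) := by
            have hc : ((qSeq' k n - 1 : ℕ) : ℝ) ≤ (qSeq' k n : ℝ) := by
              exact_mod_cast Nat.sub_le _ _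
            have hl : Real.log ((qSeq' k n - 1 : ℕ) : ℝ) ≤ Real.log (qSeq' k n) := by
              apply Real.log_le_log (by exact_mod_cast (by omega : 0 < qSeq' k n - 1)) hc
            have hl0 : (0:ℝ) ≤ Real.log ((qSeq' k n - 1 : ℕ) : ℝ) := by
              apply Real.log_nonneg; exact_mod_cast (by omega : 1 ≤ qSeq' k n - 1)
            have hc0 : (0:ℝ) ≤ ((qSeq' k n - 1 : ℕ) : ℝ) := by positivity
            nlinarith
    have hlog0 : (0:ℝ) ≤ Real.log (qSeq' k n) := Real.log_nonneg (by linarith)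
    calc Real.log (Nat.factorial (qSeq' k n - 1)) * (pSeq' k n : ℝ)
        ≤ ((qSeq' k n : ℝ) * Real.log (qSeq' k n)) * (pSeq' k n : ℝ) := by nlinarith
      _ = Real.log (qSeq' k n) * ((pSeq' k n : ℝ) * (qSeq' k n : ℝ)) := by ring
  intro n m hnm
  induction m with
  | zero => simp_all
  | succ m ih =>
    rcases Nat.lt_or_ge n (m+1) with hlt | hge
    · exact le_trans (step m) (ih (by omega))
    · have : n = m + 1 := by omega
      simp [this]

lemma log_factorial_ge (m : ℕ) :
    (m : ℝ) * Real.log m - m ≤ Real.log (Nat.factorial m) := by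
  induction m with
  | zero => simp
  | succ n ih =>
    have hpos : (0:ℝ) < (Nat.factorial n : ℝ) := by exact_mod_cast Nat.factorial_pos n
    have hfac : (Nat.factorial (n+1) : ℝ) = ((n:ℝ)+1) * (Nat.factorial n : ℝ) := by
      push_cast [Nat.factorial_succ]; ring
    have h1 : Real.log (Nat.factorial (n+1)) = Real.log ((n:ℝ)+1) + Real.log (Nat.factorial n) := by
      rw [hfac, Real.log_mul (by positivity) (ne_of_gt hpos)]
    rcases Nat.eq_zero_or_pos n with h0 | hn
    · subst h0; simp
    · have hnR : (1:ℝ) ≤ (n:ℝ) := by exact_mod_cast hn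
      have key : (n:ℝ) * Real.log ((n:ℝ)+1) ≤ (n:ℝ) * Real.log n + 1 := by
        have hdiv : Real.log (((n:ℝ)+1)/(n:ℝ)) ≤ ((n:ℝ)+1)/(n:ℝ) - 1 :=
          Real.log_le_sub_one_of_pos (by positivity)
        rw [Real.log_div (by positivity) (by positivity)] at hdiv
        have : ((n:ℝ)+1)/(n:ℝ) - 1 = 1/(n:ℝ) := by field_simp; ring
        rw [this] at hdiv
        have : (n:ℝ) * (Real.log ((n:ℝ)+1) - Real.log n) ≤ (n:ℝ) * (1/(n:ℝ)) := by
          apply mul_le_mul_of_nonneg_left hdiv (by positivity)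
        have hne : (n:ℝ) ≠ 0 := by positivity
        rw [mul_one_div, div_self hne] at this
        linarith [this]
      push_cast
      push_cast at ih
      linarith [h1, ih, key]

lemma log_le_sub_two {x : ℝ} (hx : 4 ≤ x) : Real.log x ≤ x - 2 := by
  have h0 : (0:ℝ) ≤ x := by linarith
  have hs : (2:ℝ) ≤ Real.sqrt x := by
    rw [show (2:ℝ) = Real.sqrt 4 by rw [show (4:ℝ) = 2^2 by norm_num, Real.sqrt_sq]; norm_num]
    exact Real.sqrt_le_sqrt hx
  have h1 : Real.log (Real.sqrt x) ≤ Real.sqrt x - 1 :=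
    Real.log_le_sub_one_of_pos (by linarith)
  have h2 : Real.log (Real.sqrt x) = Real.log x / 2 := Real.log_sqrt h0
  have h3 : Real.sqrt x * Real.sqrt x = x := Real.mul_self_sqrt h0
  nlinarith


noncomputable def cQ (h : ℝ) (M d p l : ℕ) : ℕ :=
  (M + l) ^ d * ⌈Real.exp ((p : ℝ) * h + 3) / (((M + l) ^ d : ℕ) : ℝ)⌉₊

noncomputable def Pfun (h : ℝ) (M d p0 : ℕ) : ℕ → ℕ
  | 0 => p0
  | l + 1 => Pfun h M d p0 l * cQ h M d (Pfun h M d p0 l) l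

noncomputable def Qfun (h : ℝ) (M d p0 l : ℕ) : ℕ := cQ h M d (Pfun h M d p0 l) l

lemma cQ_props (h : ℝ) (M d p l : ℕ) (hM4 : 4 ≤ M) (hd : 1 ≤ d)
    (hph : (M:ℝ) + l ≤ (p:ℝ) * h) :
    ((p:ℝ)*h + 3 ≤ Real.log (cQ h M d p l)) ∧
    (Real.log (cQ h M d p l) ≤ (p:ℝ)*h + (d:ℝ)*Real.log ((M:ℝ)+l) + 3) ∧
    ((M+l)^d ∣ cQ h M d p l) ∧
    (M + l + 1 ≤ cQ h M d p l) := by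
  set a : ℝ := (p:ℝ)*h + 3 with ha
  set b : ℕ := (M+l)^d with hb
  have hbM : M + l ≤ b := Nat.le_self_pow (by omega) _
  have hbR : (4:ℝ) ≤ (b:ℝ) := by exact_mod_cast (by omega : 4 ≤ b)
  have hbpos : (0:ℝ) < (b:ℝ) := by linarith
  have hMl : ((M:ℝ)+l) = ((M+l : ℕ) : ℝ) := by push_cast; ring
  have hexp_lb : (M:ℝ)+l+4 ≤ Real.exp a := by
    calc (M:ℝ)+l+4 = ((M:ℝ)+l+3)+1 := by ring
    _ ≤ Real.exp ((M:ℝ)+l+3) := Real.add_one_le_exp _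
    _ ≤ Real.exp a := Real.exp_le_exp.2 (by rw [ha]; linarith)
  have h2exp : (2:ℝ) ≤ Real.exp a := by
    have : (4:ℝ) ≤ (M:ℝ) := by exact_mod_cast hM4
    have : (0:ℝ) ≤ (l:ℝ) := by positivity
    linarith
  have hcq : (cQ h M d p l : ℝ) = (b:ℝ) * (⌈Real.exp a / (b:ℝ)⌉₊ : ℝ) := by
    have he : cQ h M d p l = b * ⌈Real.exp a / (b:ℝ)⌉₊ := rfl
    rw [he, Nat.cast_mul]
  have hlb : Real.exp a ≤ (cQ h M d p l : ℝ) := by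
    rw [hcq]
    have := Nat.le_ceil (Real.exp a / (b:ℝ))
    calc Real.exp a = (b:ℝ) * (Real.exp a / (b:ℝ)) := by field_simp
    _ ≤ (b:ℝ) * (⌈Real.exp a / (b:ℝ)⌉₊ : ℝ) := by
        apply mul_le_mul_of_nonneg_left this (le_of_lt hbpos)
  have hub : (cQ h M d p l : ℝ) ≤ (b:ℝ) * Real.exp a := by
    rw [hcq]
    have h1 : (⌈Real.exp a / (b:ℝ)⌉₊ : ℝ) < Real.exp a / (b:ℝ) + 1 :=
      Nat.ceil_lt_add_one (by positivity)
    have h2 : (b:ℝ) * (⌈Real.exp a / (b:ℝ)⌉₊ : ℝ) ≤ (b:ℝ) * (Real.exp a / (b:ℝ) + 1) := by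
      apply mul_le_mul_of_nonneg_left (le_of_lt h1) (le_of_lt hbpos)
    have h3 : (b:ℝ) * (Real.exp a / (b:ℝ) + 1) = Real.exp a + (b:ℝ) := by field_simp
    nlinarith
  have hqpos : (0:ℝ) < (cQ h M d p l : ℝ) := lt_of_lt_of_le (Real.exp_pos a) hlb
  refine ⟨?_, ?_, ?_, ?_⟩
  · calc a = Real.log (Real.exp a) := (Real.log_exp a).symm
    _ ≤ Real.log (cQ h M d p l) := (Real.log_le_log_iff (Real.exp_pos a) hqpos).2 hlb
  · calc Real.log (cQ h M d p l) ≤ Real.log ((b:ℝ) * Real.exp a) :=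
        (Real.log_le_log_iff hqpos (by positivity)).2 hub
    _ = Real.log (b:ℝ) + a := by rw [Real.log_mul (by positivity) (by positivity), Real.log_exp]
    _ = (d:ℝ)*Real.log ((M:ℝ)+l) + a := by
        rw [hb, hMl]; push_cast [Real.log_pow]; ring
    _ = (p:ℝ)*h + (d:ℝ)*Real.log ((M:ℝ)+l) + 3 := by rw [ha]; ring
  · exact Dvd.intro _ rfl
  · have : ((M+l+1 : ℕ) : ℝ) ≤ (cQ h M d p l : ℝ) := by push_cast; linarith
    exact_mod_cast this


set_option maxHeartbeats 1000000 in
/-- **Lemma.** Let `d ≥ 1`, `k ≥ 5` and `0 < h < λ(k)`; let `M ≥ 4` with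
`ξ − (d+1)·log ξ − 1 ≥ 0` for all real `ξ ≥ M`, and let `N ≥ 1` satisfy
`p'_{N−1}·h ≥ 1`, `q'_{N−1} ≥ M` and `(d·log M + 3)/p'_N < λ(k) − h`.
Setting `q_n = q'_n` for `n < N`, there exist integers `q_N, q_{N+1}, …`
such that for every `l ≥ 0` (with `p_{n+1} = p_n q_n` throughout):
(i) `q_{N+l−1} < q_{N+l} ≤ (q_{N+l−1} − 1)!`;
(ii) `p_{N+l}·h + 3 ≤ log q_{N+l} ≤ p_{N+l}·h + d·log(M+l) + 3`;
(iii) `(M+l)^d ∣ q_{N+l}`;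
(iv) `M + l + 1 ≤ q_{N+l}`. -/
theorem statement17 (d k : ℕ) (hd : 1 ≤ d) (hk : 5 ≤ k)
    (h L : ℝ) (hL : Tendsto (lamSeq k) atTop (𝓝 L)) (h0 : 0 < h) (hhL : h < L)
    (M : ℕ) (hM4 : 4 ≤ M)
    (hM : ∀ ξ : ℝ, (M : ℝ) ≤ ξ → 0 ≤ ξ - ((d : ℝ) + 1) * Real.log ξ - 1)
    (N : ℕ) (hN1 : 1 ≤ N)
    (hNh : 1 ≤ (pSeq' k (N - 1) : ℝ) * h)
    (hNM : M ≤ qSeq' k (N - 1))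
    (hNlam : ((d : ℝ) * Real.log M + 3) / (pSeq' k N : ℝ) < L - h) :
    ∃ q : ℕ → ℕ, (∀ n : ℕ, n < N → q n = qSeq' k n) ∧
      ∀ l : ℕ,
        (q (N + l - 1) < q (N + l) ∧
          q (N + l) ≤ Nat.factorial (q (N + l - 1) - 1)) ∧
        ((pFrom q (N + l) : ℝ) * h + 3 ≤ Real.log (q (N + l)) ∧
          Real.log (q (N + l)) ≤
            (pFrom q (N + l) : ℝ) * h + (d : ℝ) * Real.log ((M : ℝ) + (l : ℝ)) + 3) ∧
        ((M + l) ^ d ∣ q (N + l)) ∧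
        (M + l + 1 ≤ q (N + l)) := by
  have hNsucc : N - 1 + 1 = N := by omega
  have hp0pos : 0 < pSeq' k N := pSeq'_pos k hk N
  have hp0R : (0:ℝ) < (pSeq' k N : ℝ) := by exact_mod_cast hp0pos
  set p0 := pSeq' k N with hp0def
  have hp0eq : p0 = pSeq' k (N-1) * qSeq' k (N-1) := by
    rw [hp0def, ← hNsucc]; rfl
  have hMR : (4:ℝ) ≤ (M:ℝ) := by exact_mod_cast hM4
  have hqmR : (M:ℝ) ≤ (qSeq' k (N-1) : ℝ) := by exact_mod_cast hNM
  have hp0hmul : (p0:ℝ) * h = ((pSeq' k (N-1):ℝ) * h) * (qSeq' k (N-1):ℝ) := by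
    rw [hp0eq]; push_cast; ring
  have hqmle : (qSeq' k (N-1):ℝ) ≤ (p0:ℝ) * h := by
    rw [hp0hmul]; nlinarith
  have hp0h : (M:ℝ) ≤ (p0:ℝ) * h := le_trans hqmR hqmle
  have hLle : L ≤ lamSeq k N := by
    apply le_of_tendsto hL
    filter_upwards [eventually_ge_atTop N] with m hm
    exact lamSeq_anti k hk N m hm
  have hLlog : (p0:ℝ) * L ≤ Real.log (qSeq' k N) := by
    rw [lamSeq] at hLle
    rw [mul_comm]
    exact (le_div_iff₀ hp0R).1 hLle
  set P : ℕ → ℕ := Pfun h M d p0 with hPdef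
  set Q : ℕ → ℕ := Qfun h M d p0 with hQdef
  have hPsucc : ∀ l, P (l+1) = P l * Q l := fun l => rfl
  have hQeq : ∀ l, Q l = cQ h M d (P l) l := fun l => rfl
  set q : ℕ → ℕ := fun n => if n < N then qSeq' k n else Q (n - N) with hqdef
  have hqlt : ∀ n, n < N → q n = qSeq' k n := fun n hn => if_pos hn
  have hqge : ∀ l, q (N + l) = Q l := by
    intro l; show (if N + l < N then qSeq' k (N+l) else Q (N + l - N)) = Q l
    rw [if_neg (by omega)]; congr 1; omega
  have hpFrom : ∀ n, n ≤ N → pFrom q n = pSeq' k n := by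
    intro n
    induction n with
    | zero => intro _; rfl
    | succ m ih =>
      intro hn
      have h1 : pFrom q (m+1) = pFrom q m * q m := rfl
      have h2 : pSeq' k (m+1) = pSeq' k m * qSeq' k m := rfl
      rw [h1, h2, ih (by omega), hqlt m (by omega)]
  have hP : ∀ l, pFrom q (N + l) = P l := by
    intro l
    induction l with
    | zero => rw [Nat.add_zero, hpFrom N le_rfl]; rfl
    | succ m ih =>
      have h1 : pFrom q (N + m + 1) = pFrom q (N + m) * q (N + m) := rfl
      rw [show N + (m+1) = N + m + 1 from rfl, h1, ih, hqge m, hPsucc]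
  refine ⟨q, hqlt, ?_⟩
  have main : ∀ l : ℕ, ((M:ℝ) + l ≤ (P l : ℝ) * h) ∧
      (q (N + l - 1) < q (N + l) ∧ q (N + l) ≤ Nat.factorial (q (N + l - 1) - 1)) ∧
      ((P l : ℝ) * h + 3 ≤ Real.log (Q l) ∧
        Real.log (Q l) ≤ (P l : ℝ) * h + (d:ℝ) * Real.log ((M:ℝ) + l) + 3) ∧
      ((M + l) ^ d ∣ Q l) ∧ (M + l + 1 ≤ Q l) := by
    intro l
    induction l with
    | zero =>
      have hph0 : (M:ℝ) + (0:ℕ) ≤ (p0:ℝ) * h := by push_cast; simpa using hp0h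
      obtain ⟨c1, c2, c3, c4⟩ := cQ_props h M d p0 0 hM4 hd hph0
      have hc1 : (P 0 : ℝ) * h + 3 ≤ Real.log (Q 0) := c1
      have hc2 : Real.log (Q 0) ≤ (P 0 : ℝ) * h + (d:ℝ) * Real.log ((M:ℝ) + (0:ℕ)) + 3 := c2
      have hc4 : M + 0 + 1 ≤ Q 0 := c4
      have hQ0pos : (0:ℝ) < (Q 0 : ℝ) := by
        have : (0:ℕ) < Q 0 := by omega
        exact_mod_cast this
      have eq1 : q (N + 0 - 1) = qSeq' k (N-1) := by
        rw [show N + 0 - 1 = N - 1 by omega]; exact hqlt _ (by omega)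
      have eq2 : q (N + 0) = Q 0 := hqge 0
      refine ⟨hph0, ⟨?_, ?_⟩, ⟨hc1, hc2⟩, c3, hc4⟩
      · -- qSeq' k (N-1) < Q 0
        rw [eq1, eq2]
        have hqmpos : (0:ℝ) < (qSeq' k (N-1):ℝ) := by linarith
        have l1 : Real.log (qSeq' k (N-1)) ≤ (qSeq' k (N-1):ℝ) - 1 :=
          Real.log_le_sub_one_of_pos hqmpos
        have l2 : Real.log ((qSeq' k (N-1):ℝ)) < Real.log ((Q 0 : ℝ)) := by
          have : (P 0 : ℝ) = (p0 : ℝ) := rfl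
          rw [this] at hc1
          linarith
        exact_mod_cast (Real.log_lt_log_iff hqmpos hQ0pos).1 l2
      · -- Q 0 ≤ (qSeq' k (N-1) - 1)!
        rw [eq1, eq2]
        have hq'N : qSeq' k N = Nat.factorial (qSeq' k (N-1) - 1) := by rw [← hNsucc]; rfl
        have hfacpos : (0:ℝ) < ((Nat.factorial (qSeq' k (N-1) - 1)):ℝ) := by
          exact_mod_cast Nat.factorial_pos _
        have hdM : (d:ℝ) * Real.log M + 3 < (p0:ℝ) * (L - h) := by
          have := (div_lt_iff₀ hp0R).1 hNlam
          linarith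
        have l3 : Real.log ((Q 0:ℝ)) < Real.log ((Nat.factorial (qSeq' k (N-1) - 1)):ℝ) := by
          have hP0 : (P 0 : ℝ) = (p0 : ℝ) := rfl
          rw [hP0] at hc2
          have hM0 : ((M:ℝ) + ((0:ℕ):ℝ)) = (M:ℝ) := by push_cast; ring
          rw [hM0] at hc2
          rw [← hq'N]
          calc Real.log ((Q 0:ℝ)) ≤ (p0:ℝ) * h + (d:ℝ) * Real.log M + 3 := hc2
          _ < (p0:ℝ) * h + (p0:ℝ) * (L - h) := by linarith
          _ = (p0:ℝ) * L := by ring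
          _ ≤ Real.log (qSeq' k N) := hLlog
        have := (Real.log_lt_log_iff hQ0pos hfacpos).1 l3
        exact_mod_cast le_of_lt this
    | succ m ih =>
      obtain ⟨hinv, ⟨hi1, hi2⟩, ⟨hl1, hl2⟩, hdvd, hge⟩ := ih
      have hQmR : (M:ℝ) + m + 1 ≤ (Q m : ℝ) := by exact_mod_cast hge
      have hQmpos : (0:ℝ) < (Q m : ℝ) := by linarith
      have hmR : (0:ℝ) ≤ (m:ℝ) := by positivity
      have hph' : (M:ℝ) + ((m+1:ℕ):ℝ) ≤ ((P (m+1)):ℝ) * h := by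
        have hP1h : ((P (m+1)):ℝ) * h = ((P m:ℝ) * h) * (Q m:ℝ) := by
          rw [hPsucc]; push_cast; ring
        rw [hP1h]; push_cast
        nlinarith
      obtain ⟨c1, c2, c3, c4⟩ := cQ_props h M d (P (m+1)) (m+1) hM4 hd hph'
      have hc1 : (P (m+1) : ℝ) * h + 3 ≤ Real.log (Q (m+1)) := c1
      have hc2 : Real.log (Q (m+1)) ≤ (P (m+1) : ℝ) * h + (d:ℝ) * Real.log ((M:ℝ) + ((m+1:ℕ):ℝ)) + 3 := c2
      have hc4 : M + (m+1) + 1 ≤ Q (m+1) := c4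
      have hQ1pos : (0:ℝ) < (Q (m+1) : ℝ) := by
        have : (0:ℕ) < Q (m+1) := by omega
        exact_mod_cast this
      have hP1h : ((P (m+1)):ℝ) * h = ((P m:ℝ) * h) * (Q m:ℝ) := by
        rw [hPsucc]; push_cast; ring
      have eq1 : q (N + (m+1) - 1) = Q m := by
        rw [show N + (m+1) - 1 = N + m by omega]; exact hqge m
      have eq2 : q (N + (m+1)) = Q (m+1) := hqge (m+1)
      -- d log (M+m) ≤ M+m-1  and  d log(M+m+1) ≤ M+m
      have hlog1nn : (0:ℝ) ≤ Real.log ((M:ℝ) + m) := Real.log_nonneg (by linarith)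
      have hd1 : (d:ℝ) * Real.log ((M:ℝ) + m) ≤ (M:ℝ) + m - 1 := by
        have := hM ((M:ℝ)+m) (by linarith)
        nlinarith
      have hlog2nn : (0:ℝ) ≤ Real.log ((M:ℝ) + ((m+1:ℕ):ℝ)) := Real.log_nonneg (by push_cast; linarith)
      have hd2 : (d:ℝ) * Real.log ((M:ℝ) + ((m+1:ℕ):ℝ)) ≤ (M:ℝ) + m := by
        have := hM ((M:ℝ)+((m+1:ℕ):ℝ)) (by push_cast; linarith)
        push_cast at this ⊢
        nlinarith
      refine ⟨by push_cast at hph' ⊢; linarith, ⟨?_, ?_⟩, ⟨hc1, hc2⟩, c3, hc4⟩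
      · -- Q m < Q (m+1)
        rw [eq1, eq2]
        have key : Real.log ((Q m:ℝ)) < Real.log ((Q (m+1):ℝ)) := by
          have hmid : (P m:ℝ) * h + ((M:ℝ)+m-1) < ((P m:ℝ)*h) * (Q m:ℝ) := by
            nlinarith
          rw [hP1h] at hc1
          linarith
        exact_mod_cast (Real.log_lt_log_iff hQmpos hQ1pos).1 key
      · -- Q (m+1) ≤ (Q m - 1)!
        rw [eq1, eq2]
        have hQm1 : 1 ≤ Q m := by omega
        have hmQ : ((Q m - 1 : ℕ):ℝ) = (Q m : ℝ) - 1 := by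
          push_cast [Nat.cast_sub hQm1]; ring
        have hfacpos : (0:ℝ) < ((Nat.factorial (Q m - 1)):ℝ) := by
          exact_mod_cast Nat.factorial_pos _
        have hfl : ((Q m:ℝ) - 1) * Real.log ((Q m:ℝ) - 1) - ((Q m:ℝ) - 1)
            ≤ Real.log ((Nat.factorial (Q m - 1)):ℝ) := by
          have := log_factorial_ge (Q m - 1)
          rw [hmQ] at this
          exact this
        have hx4 : (4:ℝ) ≤ (Q m:ℝ) := by linarith
        have hlogQm : Real.log ((Q m:ℝ)) ≤ (Q m:ℝ) - 2 := log_le_sub_two hx4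
        have hQm1pos : (0:ℝ) < (Q m:ℝ) - 1 := by linarith
        have hstep : Real.log ((Q m:ℝ)) - Real.log ((Q m:ℝ) - 1) ≤ 1/((Q m:ℝ) - 1) := by
          have hq1 : Real.log ((Q m:ℝ)/((Q m:ℝ)-1)) ≤ (Q m:ℝ)/((Q m:ℝ)-1) - 1 :=
            Real.log_le_sub_one_of_pos (by positivity)
          rw [Real.log_div (by positivity) (by positivity)] at hq1
          have : (Q m:ℝ)/((Q m:ℝ)-1) - 1 = 1/((Q m:ℝ)-1) := by field_simp; ring
          linarith [this ▸ hq1]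
        have e2 : ((Q m:ℝ) - 1) * (Real.log ((Q m:ℝ)) - Real.log ((Q m:ℝ) - 1)) ≤ 1 := by
          have := mul_le_mul_of_nonneg_left hstep (le_of_lt hQm1pos)
          have heq : ((Q m:ℝ) - 1) * (1/((Q m:ℝ) - 1)) = 1 := by field_simp
          linarith [heq ▸ this]
        have e1 : ((P (m+1)):ℝ) * h ≤ (Real.log ((Q m:ℝ)) - 3) * (Q m:ℝ) := by
          rw [hP1h]
          apply mul_le_mul_of_nonneg_right (by linarith) (le_of_lt hQmpos)
        have hMmQ : (M:ℝ) + m ≤ (Q m:ℝ) - 1 := by linarith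
        have target : Real.log ((Q (m+1):ℝ)) ≤ Real.log ((Nat.factorial (Q m - 1)):ℝ) := by
          linarith [hc2, e1, hd2, hMmQ, e2, hfl, hlogQm]
        exact_mod_cast (Real.log_le_log_iff hQ1pos hfacpos).1 target
  intro l
  obtain ⟨-, h1, h2, h3, h4⟩ := main l
  refine ⟨h1, ?_, ?_, ?_⟩
  · rw [hqge l, hP l]; exact h2
  · rw [hqge l]; exact h3
  · rw [hqge l]; exact h4


end ToeplitzPaper
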